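/- Let A be a finite arrangement of affine hyperplanes in a finite-dimensional vector space V over a field, and let F^q ⊆ V be a q-dimensional affine subspace generic with respect to A. Then the Poincaré polynomial of the restricted arrangement A ∩ F^q in F^q is the degree-q truncation of that of A: π(A ∩ F^q, t) = Σ_{i=0}^{q} b_i(A) t^i, where b_i(A) is the coefficient of t^i in π(A,t). -/

import Mathlib

open scoped Classical

noncomputable section

variable (K : Type) [Field K] {V : Type} [AddCommGroup V] [Module K V]

/-- An affine hyperplane in `V`: the level set of a nonzero linear functional. -/
def IsHyperplane (H : Set V) : Prop :=
  ∃ (f : V →ₗ[K] K) (c : K), f ≠ 0 ∧ H = {x | f x = c}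

/-- The dimension of a subset of `V`: the dimension of its affine span. -/
def flatDim (X : Set V) : ℕ := Module.finrank K (affineSpan K X).direction

/-- The intersection poset `L(A)` of the arrangement `A` inside the ambient set `W`:
all nonempty intersections of subfamilies of `A` (intersected with the ambient `W`),
the empty subfamily giving `W` itself. -/
def interPosetIn (W : Set V) (A : Finset (Set V)) : Finset (Set V) :=
  (A.powerset.image fun S => W ∩ ⋂ H ∈ S, H).filter fun X => X.Nonempty

/-- The rank of `X`: its codimension within the ambient space `W`. -/
def rkIn (W X : Set V) : ℕ := flatDim K W - flatDim K X

/-- `μ` satisfies the defining recursion of the Möbius function of the poset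
`L(A)` inside the ambient set `W`.  `L(A)` is ordered by reverse inclusion, so the
condition `μ(W) = 1`, `μ(X) = -∑_{Y < X} μ(Y)` for `X > W` is equivalent to:
for every `X ∈ L(A)`, `∑_{Y ⊇ X} μ(Y)` is `1` if `X = W` and `0` otherwise. -/
def IsMobiusIn (W : Set V) (A : Finset (Set V)) (μ : Set V → ℤ) : Prop :=
  ∀ X ∈ interPosetIn W A,
    (∑ Y ∈ (interPosetIn W A).filter fun Y => X ⊆ Y, μ Y) = if X = W then 1 else 0

/-- The Poincaré polynomial `π(A,t) = ∑_{X ∈ L(A)} μ(X) (-t)^{r(X)}`. -/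
def poinIn (W : Set V) (A : Finset (Set V)) (μ : Set V → ℤ) : Polynomial ℤ :=
  ∑ X ∈ interPosetIn W A, Polynomial.C (μ X) * (- Polynomial.X) ^ (rkIn K W X)

/-- A chamber of the arrangement `A` within the ambient set `W`: a connected
component of `W ∖ ⋃_{H ∈ A} H`. -/
def IsChamberIn [TopologicalSpace V] (W : Set V) (A : Finset (Set V)) (C : Set V) : Prop :=
  ∃ x ∈ W ∩ (⋃ H ∈ A, (H : Set V))ᶜ, C = connectedComponentIn (W ∩ (⋃ H ∈ A, (H : Set V))ᶜ) x

/-- `F` is a generic (transversal) `q`-dimensional affine subspace for the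
arrangement `A`: it is (the carrier of) an affine subspace of dimension `q`, and
for every `X ∈ L(A)`, if `r(X) ≤ q` then `F ∩ X` is nonempty of dimension
`q - r(X)`, and if `r(X) > q` then `F ∩ X = ∅`. -/
def IsGenericFlat (q : ℕ) (A : Finset (Set V)) (F : Set V) : Prop :=
  (∃ W : AffineSubspace K V, (W : Set V) = F) ∧ F.Nonempty ∧ flatDim K F = q ∧
  ∀ X ∈ interPosetIn Set.univ A,
    (rkIn K Set.univ X ≤ q → (F ∩ X).Nonempty ∧ flatDim K (F ∩ X) = q - rkIn K Set.univ X) ∧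
    (q < rkIn K Set.univ X → F ∩ X = ∅)

end

open Module
set_option linter.unusedSectionVars false

section AuxAG6
variable {K : Type} [Field K] {V : Type} [AddCommGroup V] [Module K V]

/-- A set is a flat if it is the carrier of an affine subspace. -/
def AG6Flat (K : Type) [Field K] {V : Type} [AddCommGroup V] [Module K V] (X : Set V) : Prop :=
  ∃ P : AffineSubspace K V, (P : Set V) = X

lemma AG6Flat_univ : AG6Flat K (Set.univ : Set V) := ⟨⊤, rfl⟩

lemma AG6Flat_inter {X Y : Set V} (hX : AG6Flat K X) (hY : AG6Flat K Y) :
    AG6Flat K (X ∩ Y) := by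
  obtain ⟨P, rfl⟩ := hX; obtain ⟨Q, rfl⟩ := hY
  exact ⟨P ⊓ Q, P.coe_inf Q⟩

lemma AG6Flat_hyperplane {H : Set V} (h : IsHyperplane K H) : AG6Flat K H := by
  obtain ⟨f, c, -, rfl⟩ := h
  exact ⟨{ carrier := {x | f x = c}
           smul_vsub_vadd_mem' := by
             intro a p1 p2 p3 h1 h2 h3
             simp only [Set.mem_setOf_eq] at *
             simp [vsub_eq_sub, vadd_eq_add, map_add, map_smul, map_sub, h1, h2, h3] }, rfl⟩

lemma AG6Flat_biInter {S : Finset (Set V)} (h : ∀ H ∈ S, AG6Flat K H) :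
    AG6Flat K (⋂ H ∈ S, H) := by
  classical
  induction S using Finset.induction_on with
  | empty => simpa using AG6Flat_univ
  | @insert a s hnot ih =>
    rw [Finset.set_biInter_insert]
    exact AG6Flat_inter (h a (Finset.mem_insert_self a s))
      (ih fun H hH => h H (Finset.mem_insert_of_mem hH))

lemma AG6_mem_interPosetIn {W : Set V} {A : Finset (Set V)} {X : Set V} :
    X ∈ interPosetIn W A ↔ (∃ S ⊆ A, W ∩ ⋂ H ∈ S, H = X) ∧ X.Nonempty := by
  simp [interPosetIn, Finset.mem_filter, Finset.mem_image, Finset.mem_powerset]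

lemma AG6Flat_mem {W : Set V} {A : Finset (Set V)} (hW : AG6Flat K W)
    (hA : ∀ H ∈ A, AG6Flat K H) {X : Set V} (hX : X ∈ interPosetIn W A) :
    AG6Flat K X := by
  obtain ⟨⟨S, hS, rfl⟩, -⟩ := AG6_mem_interPosetIn.1 hX
  exact AG6Flat_inter hW (AG6Flat_biInter fun H hH => hA H (hS hH))

variable [FiniteDimensional K V]

lemma AG6_flatDim_mono {X Y : Set V} (h : X ⊆ Y) : flatDim K X ≤ flatDim K Y :=
  Submodule.finrank_mono (AffineSubspace.direction_le (affineSpan_mono K h))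

lemma AG6_flatDim_le (X : Set V) : flatDim K X ≤ finrank K V :=
  Submodule.finrank_le _

lemma AG6_flatDim_univ : flatDim K (Set.univ : Set V) = finrank K V := by
  rw [flatDim, AffineSubspace.span_univ K V V, AffineSubspace.direction_top, finrank_top]

lemma AG6_flatDim_coe (P : AffineSubspace K V) :
    flatDim K (P : Set V) = finrank K P.direction := by
  rw [flatDim, P.affineSpan_coe]

lemma AG6_eq_of_subset_of_dim {X Y : Set V} (hX : AG6Flat K X) (hY : AG6Flat K Y)
    (hne : X.Nonempty) (hsub : X ⊆ Y) (hd : flatDim K Y ≤ flatDim K X) : X = Y := by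
  obtain ⟨P, rfl⟩ := hX; obtain ⟨Q, rfl⟩ := hY
  rw [AG6_flatDim_coe, AG6_flatDim_coe] at hd
  have hle : P ≤ Q := hsub
  have hdir : P.direction = Q.direction :=
    Submodule.eq_of_le_of_finrank_eq (AffineSubspace.direction_le hle)
      (le_antisymm (Submodule.finrank_mono (AffineSubspace.direction_le hle)) hd)
  obtain ⟨x, hx⟩ := hne
  have : P = Q := AffineSubspace.ext_of_direction_eq hdir ⟨x, hx, hsub hx⟩
  rw [this]

lemma AG6_eq_univ {X : Set V} (hX : AG6Flat K X) (hne : X.Nonempty)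
    (hd : finrank K V ≤ flatDim K X) : X = Set.univ :=
  AG6_eq_of_subset_of_dim hX AG6Flat_univ hne (Set.subset_univ X)
    (by rw [AG6_flatDim_univ]; exact hd)

end AuxAG6

/-- For a generic `q`-dimensional affine subspace `F` of a finite
arrangement `A` of affine hyperplanes in a finite-dimensional vector space over a field,
the Poincaré polynomial of the restricted arrangement `A ∩ F = {H ∩ F : H ∈ A}` in `F`
is the degree-`q` truncation of that of `A`:
`π(A ∩ F, t) = ∑_{i=0}^{q} b_i(A) t^i`. -/
theorem poincare_of_generic_section {K : Type} [Field K] {V : Type} [AddCommGroup V]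
    [Module K V] [FiniteDimensional K V]
    (A : Finset (Set V)) (hA : ∀ H ∈ A, IsHyperplane K H)
    (q : ℕ) (F : Set V) (hF : IsGenericFlat K q A F)
    (μ μF : Set V → ℤ)
    (hμ : IsMobiusIn Set.univ A μ)
    (hμF : IsMobiusIn F (A.image fun H => H ∩ F) μF) :
    poinIn K F (A.image fun H => H ∩ F) μF
      = ∑ i ∈ Finset.range (q + 1),
          Polynomial.C ((poinIn K Set.univ A μ).coeff i) * Polynomial.X ^ i := by
  classical
  obtain ⟨⟨FP, hFPc⟩, hFne, hFdim, hgen⟩ := hF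
  set L := interPosetIn (Set.univ : Set V) A with hLdef
  set Lq := L.filter (fun X => rkIn K Set.univ X ≤ q) with hLqdef
  have hflat : ∀ X ∈ L, AG6Flat K X := fun X hX =>
    AG6Flat_mem AG6Flat_univ (fun H hH => AG6Flat_hyperplane (hA H hH)) hX
  have hrkeq : ∀ X : Set V, rkIn K Set.univ X = finrank K V - flatDim K X := by
    intro X; rw [rkIn, AG6_flatDim_univ]
  have hrk_le : ∀ X ∈ L, (F ∩ X).Nonempty → rkIn K Set.univ X ≤ q := by
    intro X hX hne
    by_contra h
    rw [(hgen X hX).2 (lt_of_not_ge h)] at hne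
    exact Set.not_nonempty_empty hne
  have huniv_mem : (Set.univ : Set V) ∈ L :=
    AG6_mem_interPosetIn.2 ⟨⟨∅, by simp, by simp⟩, ⟨hFne.choose, trivial⟩⟩
  have hruniv : rkIn K Set.univ (Set.univ : Set V) = 0 := by
    rw [hrkeq, AG6_flatDim_univ, Nat.sub_self]
  have huniv_memq : (Set.univ : Set V) ∈ Lq :=
    Finset.mem_filter.2 ⟨huniv_mem, by rw [hruniv]; exact Nat.zero_le q⟩
  -- L is closed under nonempty intersections
  have hinterL : ∀ X ∈ L, ∀ Y ∈ L, (X ∩ Y).Nonempty → X ∩ Y ∈ L := by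
    intro X hX Y hY hne
    obtain ⟨⟨S1, hS1, rfl⟩, -⟩ := AG6_mem_interPosetIn.1 hX
    obtain ⟨⟨S2, hS2, rfl⟩, -⟩ := AG6_mem_interPosetIn.1 hY
    refine AG6_mem_interPosetIn.2 ⟨⟨S1 ∪ S2, Finset.union_subset hS1 hS2, ?_⟩, hne⟩
    ext z
    simp only [Set.mem_inter_iff, Set.mem_iInter, Set.mem_univ, true_and,
      Finset.mem_union]
    constructor
    · intro h; exact ⟨fun H hH => h H (Or.inl hH), fun H hH => h H (Or.inr hH)⟩
    · rintro ⟨h1, h2⟩ H (hH | hH)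
      exacts [h1 H hH, h2 H hH]
  -- the key order lemma
  have hkey : ∀ X ∈ L, ∀ Y ∈ L, (F ∩ X).Nonempty → F ∩ X ⊆ F ∩ Y → X ⊆ Y := by
    intro X hX Y hY hne hsub
    obtain ⟨x, hxF, hxX⟩ := hne
    have hne' : (F ∩ X).Nonempty := ⟨x, hxF, hxX⟩
    have hZne : (X ∩ Y).Nonempty := ⟨x, hxX, (hsub ⟨hxF, hxX⟩).2⟩
    have hZ : X ∩ Y ∈ L := hinterL X hX Y hY hZne
    have hFZ : F ∩ (X ∩ Y) = F ∩ X := by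
      apply Set.Subset.antisymm
      · exact Set.inter_subset_inter_right F Set.inter_subset_left
      · intro z hz; exact ⟨hz.1, hz.2, (hsub hz).2⟩
    have hrX : rkIn K Set.univ X ≤ q := hrk_le X hX hne'
    have hrZ : rkIn K Set.univ (X ∩ Y) ≤ q := hrk_le _ hZ (hFZ ▸ hne')
    have hdX := ((hgen X hX).1 hrX).2
    have hdZ := ((hgen _ hZ).1 hrZ).2
    rw [hFZ, hdX] at hdZ
    have hfd : flatDim K X ≤ flatDim K (X ∩ Y) := by
      have h1 := hrkeq X; have h2 := hrkeq (X ∩ Y)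
      have h3 := AG6_flatDim_le (K := K) X
      have h4 := AG6_flatDim_le (K := K) (X ∩ Y)
      omega
    have hXY : X ∩ Y = X :=
      AG6_eq_of_subset_of_dim (hflat _ hZ) (hflat _ hX) hZne Set.inter_subset_left hfd
    intro z hz
    rw [← hXY] at hz
    exact hz.2
  have hFeq : ∀ X ∈ Lq, (F ∩ X).Nonempty := by
    intro X hX
    obtain ⟨hXL, hrX⟩ := Finset.mem_filter.1 hX
    exact ((hgen X hXL).1 hrX).1
  have heq_univ : ∀ X ∈ L, F ∩ X = F → X = Set.univ := by
    intro X hX hFX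
    have hne : (F ∩ X).Nonempty := by rw [hFX]; exact hFne
    have hrX := hrk_le X hX hne
    have hd := ((hgen X hX).1 hrX).2
    rw [hFX, hFdim] at hd
    have h1 := hrkeq X
    have h2 := AG6_flatDim_le (K := K) X
    exact AG6_eq_univ (hflat X hX) (AG6_mem_interPosetIn.1 hX).2 (by omega)
  -- identification of the restricted poset
  have hLF : interPosetIn F (A.image fun H => H ∩ F) = Lq.image (fun X => F ∩ X) := by
    ext Z
    simp only [Finset.mem_image]
    constructor
    · intro hZ
      obtain ⟨⟨S', hS', rfl⟩, hne⟩ := AG6_mem_interPosetIn.1 hZ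
      set S := A.filter (fun H => H ∩ F ∈ S') with hSdef
      have hXeq : F ∩ ⋂ H' ∈ S', H' = F ∩ (Set.univ ∩ ⋂ H ∈ S, H) := by
        ext z
        simp only [Set.mem_inter_iff, Set.mem_iInter, Set.mem_univ, true_and, hSdef,
          Finset.mem_filter]
        constructor
        · rintro ⟨hzF, h⟩
          exact ⟨hzF, fun H hH => (h _ hH.2).1⟩
        · rintro ⟨hzF, h⟩
          refine ⟨hzF, fun H' hH' => ?_⟩
          obtain ⟨H, hHA, rfl⟩ := Finset.mem_image.1 (hS' hH')
          exact ⟨h H ⟨hHA, hH'⟩, hzF⟩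
      set X := Set.univ ∩ ⋂ H ∈ S, H with hXdef
      have hZX : (F ∩ ⋂ H' ∈ S', H') = F ∩ X := hXeq
      have hXne : X.Nonempty := by
        obtain ⟨z, hz⟩ := hne
        rw [hZX] at hz
        exact ⟨z, hz.2⟩
      have hXL : X ∈ L := AG6_mem_interPosetIn.2 ⟨⟨S, Finset.filter_subset _ _, rfl⟩, hXne⟩
      have hrX : rkIn K Set.univ X ≤ q := hrk_le X hXL (by rw [← hZX]; exact hne)
      exact ⟨X, Finset.mem_filter.2 ⟨hXL, hrX⟩, hZX.symm⟩
    · rintro ⟨X, hXq, rfl⟩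
      obtain ⟨hXL, hrX⟩ := Finset.mem_filter.1 hXq
      obtain ⟨⟨S, hSA, rfl⟩, hXne⟩ := AG6_mem_interPosetIn.1 hXL
      refine AG6_mem_interPosetIn.2
        ⟨⟨S.image (fun H => H ∩ F), Finset.image_subset_image hSA, ?_⟩, hFeq _ hXq⟩
      ext z
      simp only [Set.mem_inter_iff, Set.mem_iInter, Set.mem_univ, true_and,
        Finset.mem_image]
      constructor
      · rintro ⟨hzF, h⟩
        exact ⟨hzF, fun H hH => (h (H ∩ F) ⟨H, hH, rfl⟩).1⟩
      · rintro ⟨hzF, h⟩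
        refine ⟨hzF, fun H' hH' => ?_⟩
        obtain ⟨H, hH, rfl⟩ := hH'
        exact ⟨h H hH, hzF⟩
  have hinj : ∀ X ∈ Lq, ∀ Y ∈ Lq, F ∩ X = F ∩ Y → X = Y := by
    intro X hX Y hY h
    have hXL := (Finset.mem_filter.1 hX).1
    have hYL := (Finset.mem_filter.1 hY).1
    exact Set.Subset.antisymm
      (hkey X hXL Y hYL (hFeq X hX) (h ▸ subset_rfl))
      (hkey Y hYL X hXL (hFeq Y hY) (h ▸ subset_rfl))
  -- transported Möbius recursions
  have hR2 : ∀ X ∈ Lq, (∑ Y ∈ Lq.filter fun Y => X ⊆ Y, μF (F ∩ Y))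
      = if X = Set.univ then 1 else 0 := by
    intro X hX
    have hXL := (Finset.mem_filter.1 hX).1
    have hmem : F ∩ X ∈ interPosetIn F (A.image fun H => H ∩ F) := by
      rw [hLF]; exact Finset.mem_image_of_mem _ hX
    have h := hμF (F ∩ X) hmem
    have hfilter : (interPosetIn F (A.image fun H => H ∩ F)).filter (fun Y => F ∩ X ⊆ Y)
        = (Lq.filter fun Y => X ⊆ Y).image (fun Y => F ∩ Y) := by
      rw [hLF]
      ext Z
      simp only [Finset.mem_filter, Finset.mem_image]
      constructor
      · rintro ⟨⟨Y, hY, rfl⟩, hsub⟩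
        exact ⟨Y, ⟨hY, hkey X hXL Y (Finset.mem_filter.1 hY).1 (hFeq X hX) hsub⟩, rfl⟩
      · rintro ⟨Y, ⟨hY, hXY⟩, rfl⟩
        exact ⟨⟨Y, hY, rfl⟩, Set.inter_subset_inter_right F hXY⟩
    rw [hfilter, Finset.sum_image (fun Y hY Y' hY' hh =>
      hinj Y (Finset.mem_of_mem_filter Y hY) Y' (Finset.mem_of_mem_filter Y' hY') hh)] at h
    have hiff : (F ∩ X = F) ↔ (X = Set.univ) :=
      ⟨heq_univ X hXL, by rintro rfl; exact Set.inter_univ F⟩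
    rw [if_congr hiff rfl rfl] at h
    exact h
  have hR1 : ∀ X ∈ Lq, (∑ Y ∈ Lq.filter fun Y => X ⊆ Y, μ Y)
      = if X = Set.univ then 1 else 0 := by
    intro X hX
    obtain ⟨hXL, hrX⟩ := Finset.mem_filter.1 hX
    have h := hμ X hXL
    have hfe : L.filter (fun Y => X ⊆ Y) = Lq.filter (fun Y => X ⊆ Y) := by
      ext Y
      simp only [hLqdef, Finset.mem_filter]
      constructor
      · rintro ⟨hYL, hXY⟩
        have hmono : flatDim K X ≤ flatDim K Y := AG6_flatDim_mono hXY
        have h1 := hrkeq X; have h2 := hrkeq Y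
        exact ⟨⟨hYL, by omega⟩, hXY⟩
      · rintro ⟨⟨hYL, _⟩, hXY⟩
        exact ⟨hYL, hXY⟩
    rw [hfe] at h
    exact h
  -- uniqueness of the Möbius function
  have huniq : ∀ n : ℕ, ∀ X ∈ Lq, (Lq.filter fun Y => X ⊆ Y).card ≤ n →
      μF (F ∩ X) = μ X := by
    intro n
    induction n with
    | zero =>
      intro X hX hc
      have hXU : X ∈ Lq.filter (fun Y => X ⊆ Y) := Finset.mem_filter.2 ⟨hX, subset_rfl⟩
      have := Finset.card_pos.2 ⟨X, hXU⟩
      omega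
    | succ n ih =>
      intro X hX hc
      have hXU : X ∈ Lq.filter (fun Y => X ⊆ Y) := Finset.mem_filter.2 ⟨hX, subset_rfl⟩
      have h1 := hR1 X hX
      have h2 := hR2 X hX
      rw [← Finset.add_sum_erase _ _ hXU] at h1 h2
      have hsame : ∀ Y ∈ (Lq.filter fun Y => X ⊆ Y).erase X, μF (F ∩ Y) = μ Y := by
        intro Y hY
        obtain ⟨hYne, hYU⟩ := Finset.mem_erase.1 hY
        obtain ⟨hYq, hXY⟩ := Finset.mem_filter.1 hYU
        apply ih Y hYq
        have hsub : (Lq.filter fun Z => Y ⊆ Z) ⊆ (Lq.filter fun Z => X ⊆ Z).erase X := by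
          intro Z hZ
          obtain ⟨hZq, hYZ⟩ := Finset.mem_filter.1 hZ
          refine Finset.mem_erase.2 ⟨?_, Finset.mem_filter.2 ⟨hZq, hXY.trans hYZ⟩⟩
          rintro rfl
          exact hYne (Set.Subset.antisymm hYZ hXY)
        have hc1 := Finset.card_le_card hsub
        have hc2 := Finset.card_erase_of_mem hXU
        omega
      rw [Finset.sum_congr rfl hsame] at h2
      exact add_right_cancel (h2.trans h1.symm)
  have htrans : ∀ X ∈ Lq, μF (F ∩ X) = μ X := fun X hX => huniq _ X hX le_rfl
  have hrkF : ∀ X ∈ Lq, rkIn K F (F ∩ X) = rkIn K Set.univ X := by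
    intro X hX
    obtain ⟨hXL, hrX⟩ := Finset.mem_filter.1 hX
    have hd := ((hgen X hXL).1 hrX).2
    rw [rkIn, hFdim, hd]
    omega
  have hLHS : poinIn K F (A.image fun H => H ∩ F) μF
      = ∑ X ∈ Lq, Polynomial.C (μ X) * (- Polynomial.X) ^ (rkIn K Set.univ X) := by
    rw [poinIn, hLF, Finset.sum_image hinj]
    exact Finset.sum_congr rfl fun X hX => by rw [htrans X hX, hrkF X hX]
  have hterm : ∀ (a : ℤ) (r : ℕ), Polynomial.C (a * (-1) ^ r) * Polynomial.X ^ r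
      = Polynomial.C a * (- Polynomial.X) ^ r := by
    intro a r
    rw [show (- Polynomial.X : Polynomial ℤ) = Polynomial.C (-1) * Polynomial.X by simp,
      mul_pow, ← Polynomial.C_pow, ← mul_assoc, ← Polynomial.C_mul]
  have hcoeff : ∀ i, (poinIn K Set.univ A μ).coeff i
      = ∑ X ∈ L, (if rkIn K Set.univ X = i then μ X * (-1 : ℤ) ^ i else 0) := by
    intro i
    rw [poinIn, Polynomial.finset_sum_coeff]
    refine Finset.sum_congr rfl fun X _ => ?_
    rw [← hterm, Polynomial.coeff_C_mul, Polynomial.coeff_X_pow]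
    by_cases h : rkIn K Set.univ X = i
    · subst h; simp
    · rw [if_neg (fun hh => h hh.symm), if_neg h, mul_zero]
  have hsplit : ∀ i ∈ Finset.range (q + 1),
      Polynomial.C ((poinIn K Set.univ A μ).coeff i) * Polynomial.X ^ i
        = ∑ X ∈ L, (if rkIn K Set.univ X = i
            then Polynomial.C (μ X) * (- Polynomial.X) ^ (rkIn K Set.univ X) else 0) := by
    intro i hi
    rw [hcoeff i, map_sum, Finset.sum_mul]
    refine Finset.sum_congr rfl fun X _ => ?_
    by_cases h : rkIn K Set.univ X = i
    · rw [if_pos h, if_pos h, ← h, hterm]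
    · rw [if_neg h, if_neg h, map_zero, zero_mul]
  rw [hLHS, Finset.sum_congr rfl hsplit, Finset.sum_comm, hLqdef, Finset.sum_filter]
  refine Finset.sum_congr rfl fun X _ => ?_
  rw [Finset.sum_ite_eq (Finset.range (q + 1)) (rkIn K Set.univ X)]
  simp [Finset.mem_range, Nat.lt_succ_iff]
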